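/- Let T > 0, d, m ∈ ℕ, let σ : ℝ^d → ℝ^{d×m} be twice continuously differentiable (entries σ^i_μ), and let Z : [0,T] → ℝ^m be continuously differentiable with derivative ż. For (s,t) ∈ Δ_T define ℤ^{μν}_{st} := ∫_s^t ż^μ(r) (Z^ν(r) − Z^ν(s)) dr, the antisymmetric Lévy area 𝔸^{μν}_{st} := ½ (ℤ^{μν}_{st} − ℤ^{νμ}_{st}), and the coefficients X^i_{st}(x) := Σ_μ σ^i_μ(x)(Z^μ(t) − Z^μ(s)), 𝕃^i_{st}(x) := Σ_{μ,ν,j} ℤ^{μν}_{st} ∂_j σ^i_μ(x) σ^j_ν(x). For f : ℝ^d → ℝ twice continuously differentiable set B¹_{st} f := Σ_i X^i_{st} ∂_i f, B²_{st} f := ½ Σ_{i,j} X^i_{st} X^j_{st} ∂_{ij} f + Σ_i 𝕃^i_{st} ∂_i f, and σ̂_μ g := Σ_j σ^j_μ ∂_j g. Then for every such f and every (s,t) ∈ Δ_T, pointwise on ℝ^d: B²_{st} f − ½ B¹_{st}(B¹_{st} f) = ½ Σ_{μ,ν} 𝔸^{μν}_{st} ( σ̂_ν(σ̂_μ f) −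 σ̂_μ(σ̂_ν f) ). -/

import Mathlib

/-- The `i`-th partial derivative of `f : ℝ^d → ℝ` at `x`. -/
noncomputable def partialD (d : ℕ) (f : (Fin d → ℝ) → ℝ) (i : Fin d)
    (x : Fin d → ℝ) : ℝ :=
  fderiv ℝ f x (Pi.single i 1)

/-- The iterated integral `ℤ^{μν}_{st} = ∫_s^t ż^μ(r) (Z^ν(r) − Z^ν(s)) dr`. -/
noncomputable def iterZ (m : ℕ) (Z zdot : ℝ → Fin m → ℝ) (s t : ℝ)
    (μ ν : Fin m) : ℝ :=
  ∫ r in s..t, zdot r μ * (Z r ν - Z s ν)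

/-- The antisymmetric Lévy area `𝔸^{μν}_{st} = ½ (ℤ^{μν}_{st} − ℤ^{νμ}_{st})`. -/
noncomputable def levyArea (m : ℕ) (Z zdot : ℝ → Fin m → ℝ) (s t : ℝ)
    (μ ν : Fin m) : ℝ :=
  (1 / 2) * (iterZ m Z zdot s t μ ν - iterZ m Z zdot s t ν μ)

/-- The coefficient `X^i_{st}(x) = Σ_μ σ^i_μ(x)(Z^μ(t) − Z^μ(s))`. -/
noncomputable def Xcoeff (d m : ℕ) (σ : (Fin d → ℝ) → Fin d → Fin m → ℝ)
    (Z : ℝ → Fin m → ℝ) (s t : ℝ) (x : Fin d → ℝ) (i : Fin d) : ℝ :=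
  ∑ μ : Fin m, σ x i μ * (Z t μ - Z s μ)

/-- The coefficient `𝕃^i_{st}(x) = Σ_{μ,ν,j} ℤ^{μν}_{st} ∂_j σ^i_μ(x) σ^j_ν(x)`. -/
noncomputable def Lcoeff (d m : ℕ) (σ : (Fin d → ℝ) → Fin d → Fin m → ℝ)
    (Z zdot : ℝ → Fin m → ℝ) (s t : ℝ) (x : Fin d → ℝ) (i : Fin d) : ℝ :=
  ∑ μ : Fin m, ∑ ν : Fin m, ∑ j : Fin d,
    iterZ m Z zdot s t μ ν * partialD d (fun y => σ y i μ) j x * σ x j ν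

/-- The first-order operator `B¹_{st} f = Σ_i X^i_{st} ∂_i f`. -/
noncomputable def opB1 (d m : ℕ) (σ : (Fin d → ℝ) → Fin d → Fin m → ℝ)
    (Z : ℝ → Fin m → ℝ) (s t : ℝ) (f : (Fin d → ℝ) → ℝ) (x : Fin d → ℝ) : ℝ :=
  ∑ i : Fin d, Xcoeff d m σ Z s t x i * partialD d f i x

/-- The second-order operator
`B²_{st} f = ½ Σ_{i,j} X^i_{st} X^j_{st} ∂_{ij} f + Σ_i 𝕃^i_{st} ∂_i f`. -/
noncomputable def opB2 (d m : ℕ) (σ : (Fin d → ℝ) → Fin d → Fin m → ℝ)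
    (Z zdot : ℝ → Fin m → ℝ) (s t : ℝ) (f : (Fin d → ℝ) → ℝ) (x : Fin d → ℝ) : ℝ :=
  (1 / 2) * ∑ i : Fin d, ∑ j : Fin d,
      Xcoeff d m σ Z s t x i * Xcoeff d m σ Z s t x j *
        partialD d (fun y => partialD d f j y) i x
    + ∑ i : Fin d, Lcoeff d m σ Z zdot s t x i * partialD d f i x

/-- The vector field `σ̂_μ g = Σ_j σ^j_μ ∂_j g`. -/
noncomputable def sigmaHat (d m : ℕ) (σ : (Fin d → ℝ) → Fin d → Fin m → ℝ)
    (μ : Fin m) (g : (Fin d → ℝ) → ℝ) (x : Fin d → ℝ) : ℝ :=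
  ∑ j : Fin d, σ x j μ * partialD d g j x

section Aux
variable {d : ℕ} {x : Fin d → ℝ}

lemma partialD_mul {g h : (Fin d → ℝ) → ℝ} (hg : DifferentiableAt ℝ g x)
    (hh : DifferentiableAt ℝ h x) (i : Fin d) :
    partialD d (fun y => g y * h y) i x
      = partialD d g i x * h x + g x * partialD d h i x := by
  unfold partialD
  rw [fderiv_fun_mul hg hh]
  simp; ring

lemma partialD_sum {ι : Type*} (s : Finset ι) (F : ι → (Fin d → ℝ) → ℝ)
    (h : ∀ k ∈ s, DifferentiableAt ℝ (F k) x) (i : Fin d) :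
    partialD d (fun y => ∑ k ∈ s, F k y) i x = ∑ k ∈ s, partialD d (F k) i x := by
  unfold partialD
  rw [fderiv_fun_sum h]
  simp

lemma partialD_mul_const {g : (Fin d → ℝ) → ℝ} (hg : DifferentiableAt ℝ g x)
    (c : ℝ) (i : Fin d) :
    partialD d (fun y => g y * c) i x = partialD d g i x * c := by
  unfold partialD
  rw [fderiv_mul_const hg]
  simp; ring

lemma contDiff_partialD {g : (Fin d → ℝ) → ℝ} (hg : ContDiff ℝ 2 g) (j : Fin d) :
    ContDiff ℝ 1 fun y => partialD d g j y := by
  have h1 : ContDiff ℝ 1 (fderiv ℝ g) := hg.fderiv_right (by norm_num)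
  exact (ContinuousLinearMap.apply ℝ ℝ (Pi.single j 1)).contDiff.comp h1

lemma differentiableAt_partialD {g : (Fin d → ℝ) → ℝ} (hg : ContDiff ℝ 2 g) (j : Fin d) :
    DifferentiableAt ℝ (fun y => partialD d g j y) x :=
  ((contDiff_partialD hg j).differentiable one_ne_zero) x

lemma partialD_comm {g : (Fin d → ℝ) → ℝ} (hg : ContDiff ℝ 2 g) (i j : Fin d) :
    partialD d (fun y => partialD d g j y) i x
      = partialD d (fun y => partialD d g i y) j x := by
  have hdg : Differentiable ℝ g := hg.differentiable (by norm_num)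
  have hF : ContDiff ℝ 1 (fderiv ℝ g) := hg.fderiv_right (by norm_num)
  have hFx : DifferentiableAt ℝ (fderiv ℝ g) x := (hF.differentiable one_ne_zero) x
  have key : ∀ v : Fin d → ℝ, fderiv ℝ (fun y => fderiv ℝ g y v) x
      = (fderiv ℝ (fderiv ℝ g) x).flip v := by
    intro v
    have : HasFDerivAt (fun y => fderiv ℝ g y v)
        ((fderiv ℝ (fderiv ℝ g) x).flip v) x := by
      have := hFx.hasFDerivAt.clm_apply (hasFDerivAt_const v x)
      simpa using this
    exact this.fderiv
  have hsymm := second_derivative_symmetric (f' := fderiv ℝ g)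
    (fun y => (hdg y).hasFDerivAt) hFx.hasFDerivAt (Pi.single i 1) (Pi.single j 1)
  unfold partialD
  rw [key, key]
  simpa using hsymm

end Aux

lemma chen {m : ℕ} (Z zdot : ℝ → Fin m → ℝ)
    (hZ : ∀ (μ : Fin m) (r : ℝ), HasDerivAt (fun u => Z u μ) (zdot r μ) r)
    (hzdot : ∀ μ : Fin m, Continuous fun r => zdot r μ)
    (s t : ℝ) (μ ν : Fin m) :
    iterZ m Z zdot s t μ ν + iterZ m Z zdot s t ν μ
      = (Z t μ - Z s μ) * (Z t ν - Z s ν) := by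
  have hZc : ∀ μ : Fin m, Continuous fun u => Z u μ := fun μ =>
    (Differentiable.continuous (fun r => (hZ μ r).differentiableAt) : _)
  have hderiv : ∀ r : ℝ, HasDerivAt (fun u => (Z u μ - Z s μ) * (Z u ν - Z s ν))
      (zdot r μ * (Z r ν - Z s ν) + zdot r ν * (Z r μ - Z s μ)) r := by
    intro r
    have := (((hZ μ r).sub_const (Z s μ)).fun_mul ((hZ ν r).sub_const (Z s ν)))
    exact this.congr_deriv (by ring)
  have hcont : Continuous fun r => zdot r μ * (Z r ν - Z s ν) + zdot r ν * (Z r μ - Z s μ) :=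
    (((hzdot μ).mul ((hZc ν).sub continuous_const))).add
      (((hzdot ν).mul ((hZc μ).sub continuous_const)))
  have h1 : IntervalIntegrable (fun r => zdot r μ * (Z r ν - Z s ν)) MeasureTheory.volume s t :=
    (((hzdot μ).mul ((hZc ν).sub continuous_const))).intervalIntegrable s t
  have h2 : IntervalIntegrable (fun r => zdot r ν * (Z r μ - Z s μ)) MeasureTheory.volume s t :=
    (((hzdot ν).mul ((hZc μ).sub continuous_const))).intervalIntegrable s t
  have := intervalIntegral.integral_eq_sub_of_hasDerivAt
    (f := fun u => (Z u μ - Z s μ) * (Z u ν - Z s ν))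
    (fun r _ => hderiv r) (hcont.intervalIntegrable s t)
  rw [intervalIntegral.integral_add h1 h2] at this
  simp only [iterZ]
  rw [this]
  ring

lemma sum_swap3 {A B C : Type*} [Fintype A] [Fintype B] [Fintype C]
    (T : A → B → C → ℝ) :
    (∑ a : A, ∑ b : B, ∑ c : C, T a b c) = ∑ b : B, ∑ c : C, ∑ a : A, T a b c := by
  rw [Finset.sum_comm]
  exact Finset.sum_congr rfl fun b _ => Finset.sum_comm

lemma sum_rot4 {A B C D' : Type*} [Fintype A] [Fintype B] [Fintype C] [Fintype D']
    (T : A → B → C → D' → ℝ) :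
    (∑ a : A, ∑ b : B, ∑ c : C, ∑ e : D', T a b c e)
      = ∑ b : B, ∑ c : C, ∑ e : D', ∑ a : A, T a b c e := by
  rw [sum_swap3 (fun a b c => ∑ e : D', T a b c e)]
  exact Finset.sum_congr rfl fun b _ => Finset.sum_congr rfl fun c _ => Finset.sum_comm

noncomputable def Pq (d m : ℕ) (σ : (Fin d → ℝ) → Fin d → Fin m → ℝ)
    (f : (Fin d → ℝ) → ℝ) (x : Fin d → ℝ) (μ ν : Fin m) : ℝ :=
  ∑ k : Fin d, ∑ j : Fin d, σ x k ν * (partialD d (fun y => σ y j μ) k x * partialD d f j x)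

noncomputable def Sq (d m : ℕ) (σ : (Fin d → ℝ) → Fin d → Fin m → ℝ)
    (f : (Fin d → ℝ) → ℝ) (x : Fin d → ℝ) (μ ν : Fin m) : ℝ :=
  ∑ k : Fin d, ∑ j : Fin d, σ x k ν * (σ x j μ * partialD d (fun y => partialD d f j y) k x)


/-- **The bracket of the canonical lift in terms of the Lévy area.** For `σ` of class
`C²` and `Z` of class `C¹`, the bracket `B²_{st} f − ½ B¹_{st}(B¹_{st} f)` equals
`½ Σ_{μ,ν} 𝔸^{μν}_{st} (σ̂_ν σ̂_μ − σ̂_μ σ̂_ν) f` for every `C²` function `f`. -/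
theorem bracket_eq_levyArea_lieBracket (T : ℝ) (hT : 0 < T) (d m : ℕ)
    (σ : (Fin d → ℝ) → Fin d → Fin m → ℝ) (hσ : ContDiff ℝ 2 fun x => σ x)
    (Z zdot : ℝ → Fin m → ℝ)
    (hZ : ∀ (μ : Fin m) (r : ℝ), HasDerivAt (fun u => Z u μ) (zdot r μ) r)
    (hzdot : ∀ μ : Fin m, Continuous fun r => zdot r μ) :
    ∀ f : (Fin d → ℝ) → ℝ, ContDiff ℝ 2 f →
      ∀ s t : ℝ, 0 ≤ s → s ≤ t → t ≤ T → ∀ x : Fin d → ℝ,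
        opB2 d m σ Z zdot s t f x
            - (1 / 2) * opB1 d m σ Z s t (fun y => opB1 d m σ Z s t f y) x
          = (1 / 2) * ∑ μ : Fin m, ∑ ν : Fin m,
              levyArea m Z zdot s t μ ν *
                (sigmaHat d m σ ν (sigmaHat d m σ μ f) x
                  - sigmaHat d m σ μ (sigmaHat d m σ ν f) x) := by
  intro f hf s t _hs _hst _htT x
  have hσc : ∀ (i : Fin d) (μ : Fin m), ContDiff ℝ 2 (fun y => σ y i μ) :=
    fun i μ => contDiff_pi.mp (contDiff_pi.mp hσ i) μ
  have hσdiff : ∀ (i : Fin d) (μ : Fin m) (x' : Fin d → ℝ),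
      DifferentiableAt ℝ (fun y => σ y i μ) x' :=
    fun i μ x' => ((hσc i μ).differentiable (by norm_num)) x'
  have hfd' : ∀ (j : Fin d) (x' : Fin d → ℝ),
      DifferentiableAt ℝ (fun y => partialD d f j y) x' :=
    fun j x' => differentiableAt_partialD hf j
  -- derivative of Xcoeff components
  have hXdiff : ∀ (j : Fin d) (x' : Fin d → ℝ),
      DifferentiableAt ℝ (fun y => Xcoeff d m σ Z s t y j) x' := by
    intro j x'
    exact DifferentiableAt.fun_sum fun μ _ => (hσdiff j μ x').mul_const _
  have hXd : ∀ k j : Fin d, partialD d (fun y => Xcoeff d m σ Z s t y j) k x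
      = ∑ ν : Fin m, partialD d (fun y => σ y j ν) k x * (Z t ν - Z s ν) := by
    intro k j
    have e : (fun y => Xcoeff d m σ Z s t y j)
        = fun y => ∑ ν : Fin m, σ y j ν * (Z t ν - Z s ν) := rfl
    rw [e, partialD_sum _ _ (fun ν _ => (hσdiff j ν x).mul_const _) k]
    exact Finset.sum_congr rfl fun ν _ => partialD_mul_const (hσdiff j ν x) _ k
  -- derivative of B¹ f
  have hB1d : ∀ k : Fin d, partialD d (fun y => opB1 d m σ Z s t f y) k x
      = ∑ j : Fin d,
          ((∑ ν : Fin m, partialD d (fun y => σ y j ν) k x * (Z t ν - Z s ν))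
              * partialD d f j x
            + Xcoeff d m σ Z s t x j * partialD d (fun y => partialD d f j y) k x) := by
    intro k
    have e : (fun y => opB1 d m σ Z s t f y)
        = fun y => ∑ j : Fin d, Xcoeff d m σ Z s t y j * partialD d f j y := rfl
    rw [e, partialD_sum _ _ (fun j _ => (hXdiff j x).fun_mul (hfd' j x)) k]
    refine Finset.sum_congr rfl fun j _ => ?_
    rw [partialD_mul (hXdiff j x) (hfd' j x) k, hXd k j]
  -- sigmaHat ∘ sigmaHat expansion
  have hshsh : ∀ μ ν : Fin m, sigmaHat d m σ ν (sigmaHat d m σ μ f) x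
      = Pq d m σ f x μ ν + Sq d m σ f x μ ν := by
    intro μ ν
    have e : (fun y => sigmaHat d m σ μ f y)
        = fun y => ∑ j : Fin d, σ y j μ * partialD d f j y := rfl
    have hpd : ∀ k : Fin d, partialD d (sigmaHat d m σ μ f) k x
        = ∑ j : Fin d, (partialD d (fun y => σ y j μ) k x * partialD d f j x
            + σ x j μ * partialD d (fun y => partialD d f j y) k x) := by
      intro k
      show partialD d (fun y => sigmaHat d m σ μ f y) k x = _
      rw [e, partialD_sum _ _ (fun j _ => (hσdiff j μ x).fun_mul (hfd' j x)) k]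
      exact Finset.sum_congr rfl fun j _ => partialD_mul (hσdiff j μ x) (hfd' j x) k
    show (∑ k : Fin d, σ x k ν * partialD d (sigmaHat d m σ μ f) k x) = _
    simp only [hpd, Finset.mul_sum, mul_add, Finset.sum_add_distrib, Pq, Sq]
  -- symmetry of Sq
  have hSq : ∀ μ ν : Fin m, Sq d m σ f x μ ν = Sq d m σ f x ν μ := by
    intro μ ν
    simp only [Sq]
    rw [Finset.sum_comm]
    refine Finset.sum_congr rfl fun k _ => Finset.sum_congr rfl fun j _ => ?_
    rw [partialD_comm hf]
    ring
  -- contraction of the Lcoeff term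
  have hL : (∑ i : Fin d, Lcoeff d m σ Z zdot s t x i * partialD d f i x)
      = ∑ μ : Fin m, ∑ ν : Fin m, iterZ m Z zdot s t μ ν * Pq d m σ f x μ ν := by
    calc (∑ i : Fin d, Lcoeff d m σ Z zdot s t x i * partialD d f i x)
        = ∑ i : Fin d, ∑ μ : Fin m, ∑ ν : Fin m, ∑ j : Fin d,
            iterZ m Z zdot s t μ ν * partialD d (fun y => σ y i μ) j x * σ x j ν
              * partialD d f i x := by
          simp only [Lcoeff, Finset.sum_mul]
      _ = ∑ μ : Fin m, ∑ ν : Fin m, ∑ j : Fin d, ∑ i : Fin d,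
            iterZ m Z zdot s t μ ν * partialD d (fun y => σ y i μ) j x * σ x j ν
              * partialD d f i x := sum_rot4 _
      _ = ∑ μ : Fin m, ∑ ν : Fin m, iterZ m Z zdot s t μ ν * Pq d m σ f x μ ν := by
          simp only [Pq, Finset.mul_sum]
          refine Finset.sum_congr rfl fun μ _ => Finset.sum_congr rfl fun ν _ =>
            Finset.sum_congr rfl fun j _ => Finset.sum_congr rfl fun i _ => by ring
  -- contraction of the cross term
  have hcross : (∑ k : Fin d, ∑ j : Fin d, Xcoeff d m σ Z s t x k *
        ((∑ ν : Fin m, partialD d (fun y => σ y j ν) k x * (Z t ν - Z s ν))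
          * partialD d f j x))
      = ∑ μ : Fin m, ∑ ν : Fin m,
          (iterZ m Z zdot s t μ ν + iterZ m Z zdot s t ν μ) * Pq d m σ f x ν μ := by
    calc (∑ k : Fin d, ∑ j : Fin d, Xcoeff d m σ Z s t x k *
          ((∑ ν : Fin m, partialD d (fun y => σ y j ν) k x * (Z t ν - Z s ν))
            * partialD d f j x))
        = ∑ k : Fin d, ∑ j : Fin d, ∑ μ : Fin m, ∑ ν : Fin m,
            σ x k μ * (Z t μ - Z s μ) *
              (partialD d (fun y => σ y j ν) k x * (Z t ν - Z s ν) * partialD d f j x) := by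
          refine Finset.sum_congr rfl fun k _ => Finset.sum_congr rfl fun j _ => ?_
          rw [show Xcoeff d m σ Z s t x k
              = ∑ μ : Fin m, σ x k μ * (Z t μ - Z s μ) from rfl, Finset.sum_mul]
          refine Finset.sum_congr rfl fun μ _ => ?_
          rw [Finset.sum_mul, Finset.mul_sum]
      _ = ∑ j : Fin d, ∑ μ : Fin m, ∑ ν : Fin m, ∑ k : Fin d,
            σ x k μ * (Z t μ - Z s μ) *
              (partialD d (fun y => σ y j ν) k x * (Z t ν - Z s ν) * partialD d f j x) :=
          sum_rot4 _
      _ = ∑ μ : Fin m, ∑ ν : Fin m, ∑ k : Fin d, ∑ j : Fin d,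
            σ x k μ * (Z t μ - Z s μ) *
              (partialD d (fun y => σ y j ν) k x * (Z t ν - Z s ν) * partialD d f j x) :=
          sum_rot4 _
      _ = ∑ μ : Fin m, ∑ ν : Fin m,
            ((Z t μ - Z s μ) * (Z t ν - Z s ν)) * Pq d m σ f x ν μ := by
          simp only [Pq, Finset.mul_sum]
          refine Finset.sum_congr rfl fun μ _ => Finset.sum_congr rfl fun ν _ =>
            Finset.sum_congr rfl fun k _ => Finset.sum_congr rfl fun j _ => by ring
      _ = ∑ μ : Fin m, ∑ ν : Fin m,
            (iterZ m Z zdot s t μ ν + iterZ m Z zdot s t ν μ) * Pq d m σ f x ν μ := by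
          refine Finset.sum_congr rfl fun μ _ => Finset.sum_congr rfl fun ν _ => ?_
          rw [chen Z zdot hZ hzdot s t μ ν]
  -- expand B¹(B¹ f)
  have hB1B1 : opB1 d m σ Z s t (fun y => opB1 d m σ Z s t f y) x
      = (∑ i : Fin d, ∑ j : Fin d, Xcoeff d m σ Z s t x i * Xcoeff d m σ Z s t x j *
            partialD d (fun y => partialD d f j y) i x)
        + ∑ μ : Fin m, ∑ ν : Fin m,
            (iterZ m Z zdot s t μ ν + iterZ m Z zdot s t ν μ) * Pq d m σ f x ν μ := by
    calc opB1 d m σ Z s t (fun y => opB1 d m σ Z s t f y) x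
        = ∑ k : Fin d, Xcoeff d m σ Z s t x k *
            partialD d (fun y => opB1 d m σ Z s t f y) k x := rfl
      _ = ∑ k : Fin d, ∑ j : Fin d, (Xcoeff d m σ Z s t x k *
            ((∑ ν : Fin m, partialD d (fun y => σ y j ν) k x * (Z t ν - Z s ν))
              * partialD d f j x)
            + Xcoeff d m σ Z s t x k *
              (Xcoeff d m σ Z s t x j * partialD d (fun y => partialD d f j y) k x)) := by
          refine Finset.sum_congr rfl fun k _ => ?_
          rw [hB1d k, Finset.mul_sum]
          exact Finset.sum_congr rfl fun j _ => by ring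
      _ = (∑ k : Fin d, ∑ j : Fin d, Xcoeff d m σ Z s t x k *
            ((∑ ν : Fin m, partialD d (fun y => σ y j ν) k x * (Z t ν - Z s ν))
              * partialD d f j x))
          + ∑ k : Fin d, ∑ j : Fin d, Xcoeff d m σ Z s t x k *
              (Xcoeff d m σ Z s t x j * partialD d (fun y => partialD d f j y) k x) := by
          simp only [Finset.sum_add_distrib]
      _ = _ := by
          rw [hcross, add_comm]
          congr 1
          exact Finset.sum_congr rfl fun k _ => Finset.sum_congr rfl fun j _ => by ring
  -- RHS simplification
  have hRHS : (∑ μ : Fin m, ∑ ν : Fin m,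
        levyArea m Z zdot s t μ ν *
          (sigmaHat d m σ ν (sigmaHat d m σ μ f) x
            - sigmaHat d m σ μ (sigmaHat d m σ ν f) x))
      = ((1/2 : ℝ) * ∑ μ : Fin m, ∑ ν : Fin m,
            iterZ m Z zdot s t μ ν * Pq d m σ f x μ ν)
        - ((1/2 : ℝ) * ∑ μ : Fin m, ∑ ν : Fin m,
            iterZ m Z zdot s t μ ν * Pq d m σ f x ν μ)
        - ((1/2 : ℝ) * ∑ μ : Fin m, ∑ ν : Fin m,
            iterZ m Z zdot s t ν μ * Pq d m σ f x μ ν)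
        + ((1/2 : ℝ) * ∑ μ : Fin m, ∑ ν : Fin m,
            iterZ m Z zdot s t ν μ * Pq d m σ f x ν μ) := by
    simp only [Finset.mul_sum]
    rw [← Finset.sum_sub_distrib, ← Finset.sum_sub_distrib, ← Finset.sum_add_distrib]
    refine Finset.sum_congr rfl fun μ _ => ?_
    rw [← Finset.sum_sub_distrib, ← Finset.sum_sub_distrib, ← Finset.sum_add_distrib]
    refine Finset.sum_congr rfl fun ν _ => ?_
    rw [hshsh μ ν, hshsh ν μ, hSq ν μ]
    simp only [levyArea]
    ring
  -- swap identities
  have hsw1 : (∑ μ : Fin m, ∑ ν : Fin m,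
        iterZ m Z zdot s t ν μ * Pq d m σ f x ν μ)
      = ∑ μ : Fin m, ∑ ν : Fin m, iterZ m Z zdot s t μ ν * Pq d m σ f x μ ν :=
    Finset.sum_comm
  have hsw2 : (∑ μ : Fin m, ∑ ν : Fin m,
        iterZ m Z zdot s t ν μ * Pq d m σ f x μ ν)
      = ∑ μ : Fin m, ∑ ν : Fin m, iterZ m Z zdot s t μ ν * Pq d m σ f x ν μ :=
    Finset.sum_comm
  have hsplit : (∑ μ : Fin m, ∑ ν : Fin m,
        (iterZ m Z zdot s t μ ν + iterZ m Z zdot s t ν μ) * Pq d m σ f x ν μ)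
      = (∑ μ : Fin m, ∑ ν : Fin m, iterZ m Z zdot s t μ ν * Pq d m σ f x ν μ)
        + ∑ μ : Fin m, ∑ ν : Fin m, iterZ m Z zdot s t ν μ * Pq d m σ f x ν μ := by
    simp only [add_mul, Finset.sum_add_distrib]
  -- final assembly
  simp only [opB2]
  rw [hL, hB1B1, hRHS, hsplit, hsw1, hsw2]
  ring
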